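/- Let A be a unital associative algebra over ℂ, let τ : A → ℂ be a ℂ-linear functional with the trace property τ(x*y) = τ(y*x) for all x, y ∈ A, and let F ∈ A. For n ≥ 1 define the (n+1)-linear functional φ on A by φ(a⁰, a¹, …, aⁿ) = τ(a⁰ · [F, a¹] · [F, a²] ⋯ [F, aⁿ]), where [F, a] = F*a − a*F. Then φ is a Hochschild cocycle: for all a⁰, …, a^{n+1} ∈ A, ∑_{j=0}^{n} (−1)^j · φ(a⁰, …, a^{j} * a^{j+1}, …, a^{n+1}) + (−1)^{n+1} · φ(a^{n+1} * a⁰, a¹, …, aⁿ) = 0. -/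

import Mathlib

namespace Stmt7Aux

variable {A : Type*} [Ring A]

/-- Product `[F, a s] [F, a (s+1)] ⋯ [F, a (s+t-1)]`. -/
def Q (F : A) (a : ℕ → A) (s t : ℕ) : A :=
  ((List.range t).map (fun i => F * a (s + i) - a (s + i) * F)).prod

lemma Q_zero (F : A) (a : ℕ → A) (s : ℕ) : Q F a s 0 = 1 := rfl

lemma Q_succ (F : A) (a : ℕ → A) (s t : ℕ) :
    Q F a s (t + 1) = Q F a s t * (F * a (s + t) - a (s + t) * F) := by
  simp [Q, List.range_succ]

lemma Q_succ' (F : A) (a : ℕ → A) (s t : ℕ) :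
    Q F a s (t + 1) = (F * a s - a s * F) * Q F a (s + 1) t := by
  rw [Q, List.range_succ_eq_map, List.map_cons, List.prod_cons, List.map_map]
  have h2 : List.map ((fun i => F * a (s + i) - a (s + i) * F) ∘ Nat.succ) (List.range t) =
      List.map (fun i => F * a (s + 1 + i) - a (s + 1 + i) * F) (List.range t) :=
    List.map_congr_left fun i _ => by
      simp only [Function.comp_apply]
      have h : s + i.succ = s + 1 + i := by omega
      rw [h]
  rw [h2]
  rfl

lemma prod_range_split (f : ℕ → A) (m k : ℕ) :
    ((List.range (m + k)).map f).prod =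
      ((List.range m).map f).prod * ((List.range k).map fun i => f (m + i)).prod := by
  rw [List.range_add]
  simp [List.map_map, Function.comp_def]

lemma prod_range_split3 (f : ℕ → A) (m k : ℕ) :
    ((List.range (m + 1 + k)).map f).prod =
      ((List.range m).map f).prod * f m *
        ((List.range k).map fun i => f (m + 1 + i)).prod := by
  rw [prod_range_split f (m + 1) k, prod_range_split f m 1]
  have : ((List.range 1).map fun i => f (m + i)).prod = f m := by
    simp [List.range_succ]
  rw [this]

lemma ofFn_prod (n : ℕ) (h : ℕ → A) :
    (List.ofFn fun i : Fin n => h ((i : ℕ) + 1)).prod =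
      ((List.range n).map fun i => h (i + 1)).prod := by
  rw [List.ofFn_eq_map, ← List.map_coe_finRange_eq_range, List.map_map]
  rfl

end Stmt7Aux

open Stmt7Aux in
/-- The character `φ(a⁰, …, aⁿ) = τ(a⁰ [F,a¹] ⋯ [F,aⁿ])` of the cycle associated to `F`
and a trace `τ` is a Hochschild cocycle: its Hochschild coboundary `bφ` vanishes. -/
theorem stmt_7 {A : Type*} [Ring A] [Algebra ℂ A] (τ : A →ₗ[ℂ] ℂ)
    (hτ : ∀ x y : A, τ (x * y) = τ (y * x)) (F : A) (n : ℕ) (hn : 1 ≤ n) :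
    ∀ a : ℕ → A,
      let φ : (ℕ → A) → ℂ := fun b =>
        τ (b 0 * (List.ofFn fun i : Fin n => F * b ((i : ℕ) + 1) - b ((i : ℕ) + 1) * F).prod)
      (∑ j ∈ Finset.range (n + 1), (-1 : ℂ) ^ j *
          φ (fun i => if i < j then a i else if i = j then a j * a (j + 1) else a (i + 1))) +
        (-1 : ℂ) ^ (n + 1) * φ (fun i => if i = 0 then a (n + 1) * a 0 else a i) = 0 := by
  intro a φ
  have hφ : ∀ b : ℕ → A,
      φ b = τ (b 0 * ((List.range n).map fun i => F * b (i + 1) - b (i + 1) * F).prod) := by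
    intro b
    simp only [φ]
    rw [ofFn_prod n (fun i => F * b i - b i * F)]
  -- the intermediate quantities S j = τ(a0 · δa1⋯δaj · a(j+1) · δa(j+2)⋯δa(n+1))
  set S : ℕ → ℂ := fun j =>
    τ (a 0 * (Q F a 1 j * (a (j + 1) * Q F a (j + 2) (n - j)))) with hS
  -- the j = 0 term
  have h0 : φ (fun i => if i < 0 then a i else if i = (0 : ℕ) then a 0 * a (0 + 1)
      else a (i + 1)) = S 0 := by
    set b : ℕ → A := fun i => if i < 0 then a i else if i = (0 : ℕ) then a 0 * a (0 + 1)
      else a (i + 1) with hb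
    rw [hφ b]
    have hb0 : b 0 = a 0 * a 1 := by simp [hb]
    have hm : (List.range n).map (fun i => F * b (i + 1) - b (i + 1) * F) =
        (List.range n).map fun i => F * a (2 + i) - a (2 + i) * F := by
      refine List.map_congr_left fun i _ => ?_
      have : b (i + 1) = a (2 + i) := by
        rw [hb]
        simp only [Nat.not_lt_zero, if_false, Nat.succ_ne_zero]
        congr 1
        omega
      rw [this]
    rw [hb0, hm]
    simp only [hS, Q_zero, Nat.sub_zero, zero_add, one_mul]
    have : Q F a 2 n = ((List.range n).map fun i => F * a (2 + i) - a (2 + i) * F).prod := rfl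
    rw [this, mul_assoc]
  -- the middle terms
  have hmid : ∀ j, 1 ≤ j → j ≤ n →
      φ (fun i => if i < j then a i else if i = j then a j * a (j + 1) else a (i + 1)) =
        S (j - 1) + S j := by
    intro j hj1 hj2
    obtain ⟨m, rfl⟩ : ∃ m, j = m + 1 := ⟨j - 1, by omega⟩
    set k := n - (m + 1) with hk
    have hnk : n = m + 1 + k := by omega
    set b : ℕ → A := fun i => if i < m + 1 then a i else if i = m + 1 then a (m + 1) * a (m + 1 + 1)
      else a (i + 1) with hb
    rw [hφ b]
    have hb0 : b 0 = a 0 := by simp [hb]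
    have key : ((List.range n).map fun i => F * b (i + 1) - b (i + 1) * F).prod =
        Q F a 1 m * ((F * (a (m + 1) * a (m + 2)) - a (m + 1) * a (m + 2) * F) *
          Q F a (m + 3) k) := by
      rw [hnk, prod_range_split3]
      beta_reduce
      have e1 : (List.range m).map (fun i => F * b (i + 1) - b (i + 1) * F) =
          (List.range m).map fun i => F * a (1 + i) - a (1 + i) * F := by
        refine List.map_congr_left fun i hi => ?_
        rw [List.mem_range] at hi
        have : b (i + 1) = a (1 + i) := by
          rw [hb]
          simp only [if_pos (by omega : i + 1 < m + 1)]
          congr 1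
          omega
        rw [this]
      have e2 : F * b (m + 1) - b (m + 1) * F =
          F * (a (m + 1) * a (m + 2)) - a (m + 1) * a (m + 2) * F := by
        have : b (m + 1) = a (m + 1) * a (m + 2) := by
          rw [hb]
          norm_num
        rw [this]
      have e3 : (List.range k).map (fun i => F * b (m + 1 + i + 1) - b (m + 1 + i + 1) * F) =
          (List.range k).map fun i => F * a (m + 3 + i) - a (m + 3 + i) * F := by
        refine List.map_congr_left fun i _ => ?_
        have : b (m + 1 + i + 1) = a (m + 3 + i) := by
          rw [hb]
          simp only [if_neg (by omega : ¬ m + 1 + i + 1 < m + 1),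
            if_neg (by omega : ¬ m + 1 + i + 1 = m + 1)]
          congr 1
          omega
        rw [this]
      rw [e1, e2, e3, mul_assoc]
      rfl
    rw [hb0, key]
    simp only [hS, Nat.add_sub_cancel]
    rw [(by omega : n - (m + 1) = k), (by omega : n - m = k + 1),
      (by omega : m + 1 + 1 = m + 2), (by omega : m + 1 + 2 = m + 3)]
    have hQ2 : Q F a (m + 2) (k + 1) =
        (F * a (m + 2) - a (m + 2) * F) * Q F a (m + 3) k := by
      rw [Q_succ']
      try rw [(by omega : m + 2 + 1 = m + 3)]
    have hQ1 : Q F a 1 (m + 1) = Q F a 1 m * (F * a (m + 1) - a (m + 1) * F) := by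
      rw [Q_succ]
      try rw [(by omega : 1 + m = m + 1)]
    have leib : F * (a (m + 1) * a (m + 2)) - a (m + 1) * a (m + 2) * F =
        (F * a (m + 1) - a (m + 1) * F) * a (m + 2) +
          a (m + 1) * (F * a (m + 2) - a (m + 2) * F) := by noncomm_ring
    rw [hQ2, hQ1, leib, ← map_add]
    congr 1
    noncomm_ring
  -- the last (cyclic) term
  have hlast : φ (fun i => if i = (0 : ℕ) then a (n + 1) * a 0 else a i) = S n := by
    set b : ℕ → A := fun i => if i = (0 : ℕ) then a (n + 1) * a 0 else a i with hb
    rw [hφ b]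
    have hb0 : b 0 = a (n + 1) * a 0 := by simp [hb]
    have hm : (List.range n).map (fun i => F * b (i + 1) - b (i + 1) * F) =
        (List.range n).map fun i => F * a (1 + i) - a (1 + i) * F := by
      refine List.map_congr_left fun i _ => ?_
      have : b (i + 1) = a (1 + i) := by
        rw [hb]
        simp only [Nat.succ_ne_zero, if_false]
        congr 1
        omega
      rw [this]
    rw [hb0, hm]
    simp only [hS, Nat.sub_self, Q_zero, mul_one]
    have : ((List.range n).map fun i => F * a (1 + i) - a (1 + i) * F).prod = Q F a 1 n := rfl
    rw [this, mul_assoc, hτ (a (n + 1)) (a 0 * Q F a 1 n), mul_assoc]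
  -- assemble
  rw [Finset.sum_range_succ']
  have hsum : (∑ i ∈ Finset.range n, (-1 : ℂ) ^ (i + 1) *
      φ (fun j => if j < i + 1 then a j else if j = i + 1 then a (i + 1) * a (i + 1 + 1)
        else a (j + 1))) = (-1 : ℂ) ^ n * S n - (-1 : ℂ) ^ 0 * S 0 := by
    rw [← Finset.sum_range_sub (fun i => (-1 : ℂ) ^ i * S i) n]
    refine Finset.sum_congr rfl fun i hi => ?_
    rw [Finset.mem_range] at hi
    rw [hmid (i + 1) (by omega) (by omega)]
    simp only [Nat.add_sub_cancel, pow_succ]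
    ring
  rw [hsum, h0, hlast, pow_succ]
  ring
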